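/- arXiv:0804.2032 — 2 statements merged into one kernel-verified Lean document; each statement's English description precedes it below -/
import Mathlib

section
/- For every integer m ≥ 2 there exists a digraph D on 2m + 2 vertices that has at least one out-branching, contains no useless arcs, and satisfies ℓ(D) = 2m and ℓ_s(D) = m (so ℓ(D)/ℓ_s(D) = 2). -/
/-- A (finite, loopless) directed graph, given by its vertex set and arc set. -/
structure DirGraph (V : Type) where
  verts : Set V
  arcs : Set (V × V)

namespace DirGraph

variable {V : Type}

/-- Every arc joins two distinct vertices of the digraph. -/
def WellFormed (D : DirGraph V) : Prop :=
  ∀ a ∈ D.arcs, a.1 ∈ D.verts ∧ a.2 ∈ D.verts ∧ a.1 ≠ a.2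

/-- `T` is a subgraph of `D`. -/
def IsSubgraph (T D : DirGraph V) : Prop :=
  T.verts ⊆ D.verts ∧ T.arcs ⊆ D.arcs

/-- The in-degree of a vertex. -/
noncomputable def inDeg (D : DirGraph V) (v : V) : ℕ :=
  {a ∈ D.arcs | a.2 = v}.ncard

/-- The out-degree of a vertex. -/
noncomputable def outDeg (D : DirGraph V) (v : V) : ℕ :=
  {a ∈ D.arcs | a.1 = v}.ncard

/-- A dipath in `D`: a nonempty list of distinct vertices of `D`,
consecutive ones being joined by arcs of `D`. -/
def IsDipath (D : DirGraph V) (l : List V) : Prop :=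
  l ≠ [] ∧ l.Nodup ∧ (∀ v ∈ l, v ∈ D.verts) ∧
    l.Chain' (fun u v => (u, v) ∈ D.arcs)

/-- `v` is reachable from `u` by a dipath of `D` (in particular,
every vertex of `D` reaches itself). -/
def Reaches (D : DirGraph V) (u v : V) : Prop :=
  ∃ l : List V, D.IsDipath l ∧ l.head? = some u ∧ l.getLast? = some v

/-- `R_D(u)`: the set of vertices reachable from `u` in `D`. -/
def reachSet (D : DirGraph V) (u : V) : Set V := {v | D.Reaches u v}

/-- `T` is an out-tree with root `r`: `r` is the only vertex of in-degree 0,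
every other vertex has in-degree 1, and the underlying graph is a tree
(equivalently, under the degree conditions, every vertex is reachable from `r`). -/
structure IsOutTree (T : DirGraph V) (r : V) : Prop where
  arcs_mem : ∀ a ∈ T.arcs, a.1 ∈ T.verts ∧ a.2 ∈ T.verts
  root_mem : r ∈ T.verts
  root_indeg : T.inDeg r = 0
  indeg_one : ∀ v ∈ T.verts, v ≠ r → T.inDeg v = 1
  reach_root : ∀ v ∈ T.verts, T.Reaches r v

/-- `T` is an out-tree of the digraph `D`, with root `r`. -/
def IsOutTreeOf (T D : DirGraph V) (r : V) : Prop :=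
  T.IsOutTree r ∧ T.IsSubgraph D

/-- `T` is an out-branching (spanning out-tree) of `D`, with root `r`. -/
def IsOutBranching (T D : DirGraph V) (r : V) : Prop :=
  T.IsOutTreeOf D r ∧ T.verts = D.verts

/-- `Leaf(T)`: the vertices of out-degree 0. -/
def leaves (T : DirGraph V) : Set V := {v ∈ T.verts | T.outDeg v = 0}

/-- `Branch(T)`: the vertices of out-degree at least 2. -/
def branchVerts (T : DirGraph V) : Set V := {v ∈ T.verts | 2 ≤ T.outDeg v}

/-- `BrSucc(T)`: the vertices whose in-neighbor in `T` is a branch vertex. -/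
def brSucc (T : DirGraph V) : Set V := {v | ∃ u, (u, v) ∈ T.arcs ∧ 2 ≤ T.outDeg u}

/-- `Head(B)`: the set of heads of the arcs in `B`. -/
def heads (B : Set (V × V)) : Set V := Prod.snd '' B

/-- `Back_D^T(z) = {(u,v) ∈ A(D) : v ≺_T z ⪯_T u}`. -/
def backArcs (D T : DirGraph V) (z : V) : Set (V × V) :=
  {a ∈ D.arcs | (T.Reaches a.2 z ∧ a.2 ≠ z) ∧ T.Reaches z a.1}

/-- The 1-change for `(u,v)`: add the arc `(u,v)` and delete the arc of `T`
with head `v`. -/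
def oneChange (T : DirGraph V) (u v : V) : DirGraph V :=
  ⟨T.verts, {a ∈ T.arcs | a.2 ≠ v} ∪ {(u, v)}⟩

/-- `ℓ(D)`: the maximum number of leaves over all out-trees of `D`. -/
noncomputable def ell (D : DirGraph V) : ℕ :=
  sSup {k | ∃ (T : DirGraph V) (r : V), IsOutTreeOf T D r ∧ (leaves T).ncard = k}

/-- `ℓ_s(D)`: the maximum number of leaves over all out-branchings of `D`. -/
noncomputable def ellS (D : DirGraph V) : ℕ :=
  sSup {k | ∃ (T : DirGraph V) (r : V), IsOutBranching T D r ∧ (leaves T).ncard = k}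

/-- An arc is useless if no out-branching of `D` contains it. -/
def Useless (D : DirGraph V) (a : V × V) : Prop :=
  ∀ (T : DirGraph V) (r : V), IsOutBranching T D r → a ∉ T.arcs

/-- `T` is a 1-optimal out-branching of `D`: no 1-change for an arc of
`A(D) \ A(T)` results in an out-branching with more leaves. -/
def IsOneOptimal (T D : DirGraph V) (r : V) : Prop :=
  IsOutBranching T D r ∧
    ∀ u v : V, (u, v) ∈ D.arcs → (u, v) ∉ T.arcs → v ≠ r →
      ∀ r' : V, IsOutBranching (oneChange T u v) D r' →
        (leaves (oneChange T u v)).ncard ≤ (leaves T).ncard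

/-- `(X, U)` is a tree decomposition of the digraph `D`: `U` is a tree,
every vertex of `D` is in some bag, both endpoints of every arc are in a
common bag, and for every vertex the set of nodes whose bags contain it
induces a subtree (a connected subgraph) of `U`. -/
structure IsTreeDecomp {ι : Type} (D : DirGraph V) (U : SimpleGraph ι) (X : ι → Set V) :
    Prop where
  tree : U.IsTree
  mem_bag : ∀ v ∈ D.verts, ∃ i, v ∈ X i
  arc_bag : ∀ a ∈ D.arcs, ∃ i, a.1 ∈ X i ∧ a.2 ∈ X i
  bag_connected : ∀ (v : V) (i j : ι), v ∈ X i → v ∈ X j →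
    Relation.ReflTransGen (fun x y => U.Adj x y ∧ v ∈ X x ∧ v ∈ X y) i j

/-- The underlying undirected graph of `T`, on the vertex set of `T`. -/
def underlying (T : DirGraph V) : SimpleGraph {v // v ∈ T.verts} :=
  SimpleGraph.fromRel fun a b => ((a : V), (b : V)) ∈ T.arcs

/-- The bag `X_v = {u, v} ∪ BrSucc(T) ∪ Leaf(T) ∪ Head(Back_D^T(v))`,
where `u` is the in-neighbor of `v` in `T` (omitted when `v` is the root). -/
def bag (D T : DirGraph V) (v : V) : Set V :=
  {u | (u, v) ∈ T.arcs} ∪ {v} ∪ brSucc T ∪ leaves T ∪ heads (backArcs D T v)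

/-- The set of arcs of a dipath given as a list of vertices. -/
def listArcs (l : List V) : Set (V × V) := {a | a ∈ l.zip l.tail}

end DirGraph

namespace DirGraph

variable {V : Type}

lemma reaches_refl {T : DirGraph V} {v : V} (hv : v ∈ T.verts) : T.Reaches v v :=
  ⟨[v], ⟨by simp, by simp, by simpa, List.isChain_singleton _⟩, rfl, rfl⟩

lemma verts_of_reaches {T : DirGraph V} {u v : V} (h : T.Reaches u v) :
    u ∈ T.verts ∧ v ∈ T.verts := by
  obtain ⟨l, ⟨hne, hnd, hmem, hc⟩, hh, hl⟩ := h
  exact ⟨hmem u (List.mem_of_mem_head? (by simp [hh])),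
    hmem v (List.mem_of_mem_getLast? (by simp [hl]))⟩

lemma reaches_snoc {T : DirGraph V} {u v z : V} (h : T.Reaches u v)
    (ha : (v, z) ∈ T.arcs) (hz : z ∈ T.verts) : T.Reaches u z := by
  obtain ⟨l, ⟨hne, hnd, hmem, hc⟩, hh, hl⟩ := h
  by_cases hzl : z ∈ l
  · obtain ⟨s, t, rfl⟩ := List.append_of_mem hzl
    have hpre : (s ++ [z]) <+: (s ++ z :: t) := ⟨t, by simp⟩
    refine ⟨s ++ [z], ⟨by simp, hnd.sublist hpre.sublist,
      fun x hx => hmem x (hpre.sublist.mem hx), hc.prefix hpre⟩, ?_, by simp⟩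
    · cases s with
      | nil => simpa using hh
      | cons a s' => simpa using hh
  · refine ⟨l ++ [z], ⟨by simp, ?_, ?_, ?_⟩, ?_, by simp⟩
    · simp [List.nodup_append, hnd, hzl]
      exact fun a ha h => hzl (h ▸ ha)
    · intro x hx
      rcases List.mem_append.1 hx with h | h
      · exact hmem x h
      · simp at h; subst h; exact hz
    · show List.IsChain _ _
      rw [List.isChain_append]
      refine ⟨hc, by simp, ?_⟩
      intro x hx y hy
      simp at hy
      rw [hl] at hx; simp at hx
      subst hx; subst hy; exact ha
    · cases l with
      | nil => simp at hne
      | cons a s' => simpa using hh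

lemma reaches_cons {T : DirGraph V} {u v z : V} (ha : (u, v) ∈ T.arcs)
    (hu : u ∈ T.verts) (h : T.Reaches v z) : T.Reaches u z := by
  obtain ⟨l, ⟨hne, hnd, hmem, hc⟩, hh, hl⟩ := h
  by_cases hul : u ∈ l
  · obtain ⟨s, t, rfl⟩ := List.append_of_mem hul
    have hsuf : (u :: t) <:+ (s ++ u :: t) := ⟨s, rfl⟩
    refine ⟨u :: t, ⟨by simp, hnd.sublist hsuf.sublist,
      fun x hx => hmem x (hsuf.sublist.mem hx), hc.suffix hsuf⟩, by simp, ?_⟩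
    · rw [← hl, List.getLast?_append]
      obtain ⟨x, hx⟩ := Option.isSome_iff_exists.1 (List.getLast?_isSome.2 (by simp) : (u :: t).getLast?.isSome)
      rw [hx]; rfl
  · refine ⟨u :: l, ⟨by simp, by simp [hnd, hul], ?_, ?_⟩, by simp, ?_⟩
    · intro x hx
      rcases List.mem_cons.1 hx with h | h
      · subst h; exact hu
      · exact hmem x h
    · show List.IsChain _ _
      rw [List.isChain_cons]
      refine ⟨fun y hy => ?_, hc⟩
      rw [hh] at hy; simp at hy; subst hy; exact ha
    · cases l with
      | nil => simp at hne
      | cons a s' => simp [← hl]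

end DirGraph
namespace DirGraph

variable {V : Type}

lemma chain'_pred {R : V → V → Prop} :
    ∀ {l : List V} {x c : V}, List.Chain' R (x :: l) → c ∈ l → ∃ s ∈ x :: l, R s c := by
  intro l
  induction l with
  | nil => intro x c _ hc; simp at hc
  | cons y t ih =>
    intro x c hch hc
    rcases List.mem_cons.1 hc with rfl | hc
    · exact ⟨x, by simp, (List.isChain_cons_cons.1 hch).1⟩
    · obtain ⟨s, hs, hr⟩ := ih (List.isChain_cons_cons.1 hch).2 hc
      exact ⟨s, List.mem_cons_of_mem x hs, hr⟩

lemma crossing {R : V → V → Prop} {S : Set V} :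
    ∀ (p : List V) (h : V), List.Chain' R p → p.head? = some h → h ∉ S →
      ∀ e, p.getLast? = some e → e ∈ S → ∃ q c, R q c ∧ q ∉ S ∧ c ∈ S := by
  intro p
  induction p with
  | nil => intro h _ hh; simp at hh
  | cons x t ih =>
    intro h hch hh hhS e he heS
    simp at hh; subst hh
    cases t with
    | nil => simp at he; subst he; exact absurd heS hhS
    | cons y t' =>
      by_cases hy : y ∈ S
      · exact ⟨x, y, (List.isChain_cons_cons.1 hch).1, hhS, hy⟩
      · exact ih y (List.isChain_cons_cons.1 hch).2 rfl hy e (by simpa using he) heS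

lemma exists_in_arc {T : DirGraph V} {r v : V} (hT : T.IsOutTree r)
    (hv : v ∈ T.verts) (hvr : v ≠ r) : ∃ u, (u, v) ∈ T.arcs := by
  have h := hT.indeg_one v hv hvr
  rw [inDeg, Set.ncard_eq_one] at h
  obtain ⟨a, ha⟩ := h
  have : a ∈ {a ∈ T.arcs | a.2 = v} := ha ▸ rfl
  obtain ⟨h1, h2⟩ := this
  exact ⟨a.1, by rw [show (a.1, v) = a by rw [← h2]] ; exact h1⟩

variable [Finite V]

lemma not_leaf_of_arc {T : DirGraph V} {u v : V} (ha : (u, v) ∈ T.arcs) :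
    u ∉ T.leaves := by
  rintro ⟨-, h⟩
  rw [outDeg, Set.ncard_eq_zero (Set.toFinite _)] at h
  exact absurd h (Set.nonempty_iff_ne_empty.1 ⟨(u, v), ha, rfl⟩)

lemma two_in_arcs_false {T : DirGraph V} {r c q s : V} (hT : T.IsOutTree r)
    (hc : c ∈ T.verts) (hcr : c ≠ r) (h1 : (q, c) ∈ T.arcs) (h2 : (s, c) ∈ T.arcs)
    (hqs : q ≠ s) : False := by
  have h := hT.indeg_one c hc hcr
  have : 1 < T.inDeg c := by
    rw [inDeg, Set.one_lt_ncard_iff (Set.toFinite _)]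
    exact ⟨(q, c), (s, c), ⟨h1, rfl⟩, ⟨h2, rfl⟩, by simp [hqs]⟩
  omega

lemma no_cycle {T : DirGraph V} {r u v : V} (hT : T.IsOutTree r)
    (ha : (u, v) ∈ T.arcs) (hr : T.Reaches v u) : False := by
  obtain ⟨l, ⟨hne, hnd, hvmem, hc⟩, hh, hl⟩ := hr
  have hin : ∀ c ∈ l, ∃ s ∈ l, (s, c) ∈ T.arcs := by
    intro c hcmem
    cases l with
    | nil => simp at hne
    | cons x t =>
      simp at hh; subst hh
      rcases List.mem_cons.1 hcmem with rfl | hct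
      · exact ⟨u, List.mem_of_mem_getLast? (by simp [hl]), ha⟩
      · obtain ⟨s, hs, hsa⟩ := chain'_pred hc hct
        exact ⟨s, hs, hsa⟩
  have hrnot : r ∉ l := by
    intro hrl
    obtain ⟨s, _, hsa⟩ := hin r hrl
    have h0 := hT.root_indeg
    rw [inDeg, Set.ncard_eq_zero (Set.toFinite _)] at h0
    exact absurd h0 (Set.nonempty_iff_ne_empty.1 ⟨(s, r), hsa, rfl⟩)
  have hvl : v ∈ l := List.mem_of_mem_head? (by simp [hh])
  have hvverts : v ∈ T.verts := hvmem v hvl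
  obtain ⟨p, ⟨pne, pnd, pv, pc⟩, ph, pl⟩ := hT.reach_root v hvverts
  have phs : p.head? = some r := ph
  obtain ⟨q, c, hqc, hq, hcS⟩ :=
    crossing (S := {x | x ∈ l}) p r pc phs hrnot v pl hvl
  obtain ⟨s, hs, hsa⟩ := hin c hcS
  exact two_in_arcs_false hT (hvmem c hcS) (fun h => hrnot (h ▸ hcS)) hqc hsa
    (fun h => hq (h ▸ hs))

lemma forced_chain {T : DirGraph V} {r w : V} (hT : T.IsOutTree r)
    (hsp : ∀ v : V, v ∈ T.verts) (f : ℕ → V) (m : ℕ)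
    (hfw : (f m, w) ∈ T.arcs)
    (hfr : ∀ i, 1 ≤ i → i ≤ m → f i ≠ r)
    (hfnw : ∀ i, i ≤ m → f i ≠ w)
    (hin : ∀ i, 1 ≤ i → i ≤ m → ∀ u, (u, f i) ∈ T.arcs → u = f (i - 1) ∨ u = w) :
    ∀ i, 1 ≤ i → i ≤ m → (f (i - 1), f i) ∈ T.arcs := by
  have Q : ∀ k j, j + k = m → T.Reaches (f j) w := by
    intro k
    induction k with
    | zero =>
      intro j hj
      have : j = m := by omega
      subst this
      exact reaches_cons hfw (hsp _) (reaches_refl (hsp _))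
    | succ k ih =>
      intro j hj
      have hQ1 : T.Reaches (f (j + 1)) w := ih (j + 1) (by omega)
      obtain ⟨u, hu⟩ := exists_in_arc hT (hsp (f (j + 1))) (hfr (j + 1) (by omega) (by omega))
      rcases hin (j + 1) (by omega) (by omega) u hu with h | h
      · rw [h, show j + 1 - 1 = j from by omega] at hu
        exact reaches_cons hu (hsp _) hQ1
      · rw [h] at hu
        exact absurd hQ1 (fun hR => no_cycle hT hu hR)
  intro i h1 h2
  obtain ⟨u, hu⟩ := exists_in_arc hT (hsp (f i)) (hfr i h1 h2)
  rcases hin i h1 h2 u hu with h | h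
  · rwa [h] at hu
  · rw [h] at hu
    exact absurd (Q (m - i) i (by omega)) (fun hR => no_cycle hT hu hR)

end DirGraph
namespace DirGraph

variable {V : Type}

/-- The spanning tree given by a parent function. -/
def ptree (par : V → V) (r : V) : DirGraph V :=
  ⟨Set.univ, {p | p.2 ≠ r ∧ p.1 = par p.2}⟩

lemma iterate_root {par : V → V} {r : V} (μ : V → ℕ)
    (h : ∀ v, v ≠ r → μ (par v) < μ v) : ∀ v, ∃ k, par^[k] v = r := by
  suffices H : ∀ n (v : V), μ v = n → ∃ k, par^[k] v = r by
    exact fun v => H (μ v) v rfl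
  intro n
  induction n using Nat.strong_induction_on with
  | _ n ih =>
    intro v hn
    subst hn
    by_cases hv : v = r
    · exact ⟨0, hv⟩
    · obtain ⟨k, hk⟩ := ih (μ (par v)) (h v hv) (par v) rfl
      exact ⟨k + 1, by rwa [Function.iterate_succ_apply]⟩

lemma ptree_isOutTree [Finite V] (par : V → V) (r : V)
    (hit : ∀ v, ∃ k, par^[k] v = r) : (ptree par r).IsOutTree r := by
  have hreach : ∀ (k : ℕ) (v : V), par^[k] v = r → (ptree par r).Reaches r v := by
    intro k
    induction k with
    | zero => intro v hv; simp at hv; subst hv; exact reaches_refl (Set.mem_univ _)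
    | succ k ih =>
      intro v hv
      rw [Function.iterate_succ_apply] at hv
      by_cases hvr : v = r
      · subst hvr; exact reaches_refl (Set.mem_univ _)
      · exact reaches_snoc (ih (par v) hv) ⟨hvr, rfl⟩ (Set.mem_univ v)
  refine ⟨fun a _ => ⟨Set.mem_univ _, Set.mem_univ _⟩, Set.mem_univ r, ?_, ?_, ?_⟩
  · rw [inDeg, Set.ncard_eq_zero (Set.toFinite _)]
    ext a; simp only [Set.mem_setOf_eq, Set.mem_empty_iff_false, iff_false]
    rintro ⟨⟨h1, -⟩, h2⟩; exact h1 h2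
  · intro v _ hvr
    rw [inDeg]
    have : {a ∈ (ptree par r).arcs | a.2 = v} = {(par v, v)} := by
      ext ⟨x, y⟩
      simp only [ptree, Set.mem_setOf_eq, Set.mem_singleton_iff, Prod.mk.injEq]
      constructor
      · rintro ⟨⟨-, h2⟩, h3⟩; subst h3; exact ⟨h2, rfl⟩
      · rintro ⟨rfl, rfl⟩; exact ⟨⟨hvr, rfl⟩, rfl⟩
    rw [this, Set.ncard_singleton]
  · intro v _
    obtain ⟨k, hk⟩ := hit v
    exact hreach k v hk

lemma ptree_branching [Finite V] {D : DirGraph V} (par : V → V) (r : V)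
    (hit : ∀ v, ∃ k, par^[k] v = r) (hD : D.verts = Set.univ)
    (harcs : ∀ v : V, v ≠ r → (par v, v) ∈ D.arcs) :
    (ptree par r).IsOutBranching D r := by
  refine ⟨⟨ptree_isOutTree par r hit, ?_, ?_⟩, by rw [ptree, hD]⟩
  · rw [ptree, hD]
  · rintro ⟨x, y⟩ ⟨h1, h2⟩
    simp only at h1 h2
    rw [h2]; exact harcs y h1

lemma ptree_leaves [Finite V] (par : V → V) (r : V) :
    (ptree par r).leaves = {v | ∀ y, y ≠ r → par y ≠ v} := by
  ext v
  simp only [leaves, ptree, Set.mem_setOf_eq, Set.mem_univ, true_and]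
  rw [outDeg, Set.ncard_eq_zero (Set.toFinite _), Set.eq_empty_iff_forall_notMem]
  constructor
  · intro h y hy hpy
    exact h (v, y) ⟨⟨hy, hpy.symm⟩, rfl⟩
  · rintro h ⟨x, y⟩ ⟨⟨h1, h2⟩, h3⟩
    exact h y h1 (h2 ▸ h3 ▸ rfl)

lemma ncard_interval {n a b : ℕ} (h : b < n) :
    ({v : Fin n | a ≤ ↑v ∧ ↑v ≤ b}).ncard = b + 1 - a := by
  have h1 : Fin.val '' {v : Fin n | a ≤ ↑v ∧ ↑v ≤ b} = Set.Icc a b := by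
    ext x
    simp only [Set.mem_image, Set.mem_setOf_eq, Set.mem_Icc]
    constructor
    · rintro ⟨v, ⟨h1, h2⟩, rfl⟩; exact ⟨h1, h2⟩
    · rintro ⟨h1, h2⟩; exact ⟨⟨x, by omega⟩, ⟨h1, h2⟩, rfl⟩
  rw [← Set.ncard_image_of_injective _ Fin.val_injective, h1,
    show Set.Icc a b = ↑(Finset.Icc a b) by simp, Set.ncard_coe_finset, Nat.card_Icc]

end DirGraph
namespace DirGraph

/-- Arc predicate of the example digraph. -/
def DP (m x y : ℕ) : Prop :=
  (x + 1 = y ∧ 1 ≤ y ∧ y ≤ m) ∨ (x = 0 ∧ y = m + 1) ∨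
  (x + 1 = y ∧ m + 2 ≤ y ∧ y ≤ 2 * m) ∨ (x = m ∧ y = 2 * m + 1) ∨
  (x = 2 * m ∧ y = 2 * m + 1) ∨ (x = 2 * m + 1 ∧ 1 ≤ y ∧ y ≤ 2 * m)

/-- The example digraph. -/
def Dm (m : ℕ) : DirGraph (Fin (2 * m + 2)) :=
  ⟨Set.univ, {p | DP m ↑p.1 ↑p.2}⟩

def pa (m j : ℕ) : ℕ := if j ≤ m then j - 1 else if j ≤ 2 * m then 2 * m + 1 else m

def pb (m j : ℕ) : ℕ :=
  if j ≤ m then 2 * m + 1 else if j = m + 1 then 0 else if j ≤ 2 * m then j - 1 else 2 * m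

def parA (m : ℕ) (v : Fin (2 * m + 2)) : Fin (2 * m + 2) :=
  ⟨pa m ↑v, by have := v.isLt; unfold pa; split_ifs <;> omega⟩

def parB (m : ℕ) (v : Fin (2 * m + 2)) : Fin (2 * m + 2) :=
  ⟨pb m ↑v, by have := v.isLt; unfold pb; split_ifs <;> omega⟩

def r0 (m : ℕ) : Fin (2 * m + 2) := ⟨0, by omega⟩
def w0 (m : ℕ) : Fin (2 * m + 2) := ⟨2 * m + 1, by omega⟩

def TA (m : ℕ) : DirGraph (Fin (2 * m + 2)) := ptree (parA m) (r0 m)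
def TB (m : ℕ) : DirGraph (Fin (2 * m + 2)) := ptree (parB m) (r0 m)

def SW (m : ℕ) : DirGraph (Fin (2 * m + 2)) :=
  ⟨{v | (1 : ℕ) ≤ ↑v}, {p | (↑p.1 : ℕ) = 2 * m + 1 ∧ (1 : ℕ) ≤ ↑p.2 ∧ (↑p.2 : ℕ) ≤ 2 * m}⟩

def mua (m j : ℕ) : ℕ := if j ≤ m then j else if j = 2 * m + 1 then m + 1 else m + 2

def mub (m j : ℕ) : ℕ :=
  if j = 0 then 0 else if j ≤ m then m + 2 else if j = 2 * m + 1 then m + 1 else j - m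

variable {m : ℕ}

lemma branchA (hm : 1 ≤ m) : (TA m).IsOutBranching (Dm m) (r0 m) := by
  refine ptree_branching _ _ ?_ rfl ?_
  · refine iterate_root (fun v => mua m ↑v) ?_
    intro v hv
    have h1 := v.isLt
    have h2 : (↑v : ℕ) ≠ 0 := fun h => hv (Fin.ext_iff.2 (by exact h))
    show mua m ↑(parA m v) < mua m ↑v
    have hva : (↑(parA m v) : ℕ) = pa m ↑v := rfl
    rw [hva]
    unfold mua pa
    split_ifs <;> omega
  · intro v hv
    have h1 := v.isLt
    have h2 : (↑v : ℕ) ≠ 0 := fun h => hv (Fin.ext_iff.2 h)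
    show DP m (pa m ↑v) ↑v
    unfold DP pa
    split_ifs <;> omega

lemma branchB (hm : 1 ≤ m) : (TB m).IsOutBranching (Dm m) (r0 m) := by
  refine ptree_branching _ _ ?_ rfl ?_
  · refine iterate_root (fun v => mub m ↑v) ?_
    intro v hv
    have h1 := v.isLt
    have h2 : (↑v : ℕ) ≠ 0 := fun h => hv (Fin.ext_iff.2 (by exact h))
    show mub m ↑(parB m v) < mub m ↑v
    have hvb : (↑(parB m v) : ℕ) = pb m ↑v := rfl
    rw [hvb]
    unfold mub pb
    split_ifs <;> omega
  · intro v hv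
    have h1 := v.isLt
    have h2 : (↑v : ℕ) ≠ 0 := fun h => hv (Fin.ext_iff.2 h)
    show DP m (pb m ↑v) ↑v
    unfold DP pb
    split_ifs <;> omega

lemma leavesA (hm : 1 ≤ m) :
    (TA m).leaves = {v : Fin (2 * m + 2) | m + 1 ≤ ↑v ∧ ↑v ≤ 2 * m} := by
  unfold TA
  rw [ptree_leaves]
  ext v
  have h1 := v.isLt
  simp only [Set.mem_setOf_eq]
  constructor
  · intro h
    by_contra hc
    rcases (by omega : (↑v : ℕ) < m ∨ ↑v = m ∨ ↑v = 2 * m + 1) with hj | hj | hj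
    · refine h ⟨↑v + 1, by omega⟩ (fun he => by simp only [r0, Fin.mk.injEq] at he; omega) ?_
      refine Fin.ext_iff.2 ?_
      show pa m (↑v + 1) = ↑v
      unfold pa; split_ifs <;> omega
    · refine h (w0 m) (fun he => by simp only [r0, w0, Fin.mk.injEq] at he; omega) ?_
      refine Fin.ext_iff.2 ?_
      show pa m (2 * m + 1) = ↑v
      unfold pa; split_ifs <;> omega
    · refine h ⟨m + 1, by omega⟩ (fun he => by simp only [r0, Fin.mk.injEq] at he; omega) ?_
      refine Fin.ext_iff.2 ?_
      show pa m (m + 1) = ↑v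
      unfold pa; split_ifs <;> omega
  · rintro ⟨ha, hb⟩ y hy hpy
    have h2 : (↑y : ℕ) ≠ 0 := fun h => hy (Fin.ext_iff.2 (by exact h))
    have h3 := y.isLt
    have h4 : pa m ↑y = ↑v := Fin.ext_iff.1 hpy
    unfold pa at h4
    split_ifs at h4 <;> omega

lemma leavesB (hm : 1 ≤ m) :
    (TB m).leaves = {v : Fin (2 * m + 2) | (1 : ℕ) ≤ ↑v ∧ ↑v ≤ m} := by
  unfold TB
  rw [ptree_leaves]
  ext v
  have h1 := v.isLt
  simp only [Set.mem_setOf_eq]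
  constructor
  · intro h
    by_contra hc
    rcases (by omega : (↑v : ℕ) = 0 ∨ ↑v = 2 * m + 1 ∨ ((↑v : ℕ) = 2 * m ∧ m + 1 ≤ 2 * m) ∨
        ((↑v : ℕ) ≥ m + 1 ∧ ↑v + 1 ≤ 2 * m)) with hj | hj | hj | hj
    · refine h ⟨m + 1, by omega⟩ (fun he => by simp only [r0, Fin.mk.injEq] at he; omega) ?_
      refine Fin.ext_iff.2 ?_
      show pb m (m + 1) = ↑v
      unfold pb; split_ifs <;> omega
    · refine h ⟨1, by omega⟩ (fun he => by simp only [r0, Fin.mk.injEq] at he; omega) ?_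
      refine Fin.ext_iff.2 ?_
      show pb m 1 = ↑v
      unfold pb; split_ifs <;> omega
    · refine h (w0 m) (fun he => by simp only [r0, w0, Fin.mk.injEq] at he; omega) ?_
      refine Fin.ext_iff.2 ?_
      show pb m (2 * m + 1) = ↑v
      unfold pb; split_ifs <;> omega
    · refine h ⟨↑v + 1, by omega⟩ (fun he => by simp only [r0, Fin.mk.injEq] at he; omega) ?_
      refine Fin.ext_iff.2 ?_
      show pb m (↑v + 1) = ↑v
      unfold pb; split_ifs <;> omega
  · rintro ⟨ha, hb⟩ y hy hpy
    have h2 : (↑y : ℕ) ≠ 0 := fun h => hy (Fin.ext_iff.2 (by exact h))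
    have h3 := y.isLt
    have h4 : pb m ↑y = ↑v := Fin.ext_iff.1 hpy
    unfold pb at h4
    split_ifs at h4 <;> omega

lemma ncard_leavesA (hm : 1 ≤ m) : (TA m).leaves.ncard = m := by
  rw [leavesA hm, ncard_interval (by omega)]; omega

lemma ncard_leavesB (hm : 1 ≤ m) : (TB m).leaves.ncard = m := by
  rw [leavesB hm, ncard_interval (by omega)]; omega

lemma arc_cover (hm : 1 ≤ m) {a : Fin (2 * m + 2) × Fin (2 * m + 2)}
    (ha : a ∈ (Dm m).arcs) : a ∈ (TA m).arcs ∨ a ∈ (TB m).arcs := by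
  obtain ⟨x, y⟩ := a
  have hd : DP m ↑x ↑y := ha
  have h1 := x.isLt
  have h2 := y.isLt
  have hy0 : (↑y : ℕ) ≠ 0 := by unfold DP at hd; omega
  have hyr : y ≠ r0 m := fun he => hy0 (Fin.ext_iff.1 he)
  have hva : (↑(parA m y) : ℕ) = pa m ↑y := rfl
  have hvb : (↑(parB m y) : ℕ) = pb m ↑y := rfl
  rcases (by unfold DP at hd; unfold pa pb; split_ifs <;> omega :
      (↑x : ℕ) = pa m ↑y ∨ (↑x : ℕ) = pb m ↑y) with h | h
  · exact Or.inl ⟨hyr, Fin.ext_iff.2 (h.trans hva.symm)⟩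
  · exact Or.inr ⟨hyr, Fin.ext_iff.2 (h.trans hvb.symm)⟩

end DirGraph
namespace DirGraph

variable {m : ℕ}

lemma w0_val : (↑(w0 m) : ℕ) = 2 * m + 1 := rfl

lemma star_outTreeOf (hm : 1 ≤ m) : (SW m).IsOutTreeOf (Dm m) (w0 m) := by
  constructor
  · constructor
    · rintro ⟨x, y⟩ ⟨hx, hy1, hy2⟩
      dsimp only at hx hy1 hy2
      exact ⟨show (1 : ℕ) ≤ ↑x by omega, show (1 : ℕ) ≤ ↑y by omega⟩
    · show (1 : ℕ) ≤ ↑(w0 m); rw [w0_val]; omega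
    · rw [inDeg, Set.ncard_eq_zero (Set.toFinite _), Set.eq_empty_iff_forall_notMem]
      rintro ⟨x, y⟩ ⟨⟨hx, hy1, hy2⟩, hy⟩
      dsimp only at hx hy1 hy2 hy
      have h5 : (↑y : ℕ) = 2 * m + 1 := (Fin.ext_iff.1 hy).trans w0_val
      omega
    · intro v hv hvw
      have h1 := v.isLt
      have hv1 : (1 : ℕ) ≤ ↑v := hv
      have hv2 : (↑v : ℕ) ≠ 2 * m + 1 := fun h => hvw (Fin.ext_iff.2 (h.trans w0_val.symm))
      rw [inDeg]
      have heq : {a ∈ (SW m).arcs | a.2 = v} = {(w0 m, v)} := by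
        ext ⟨x, y⟩
        simp only [SW, Set.mem_setOf_eq, Set.mem_singleton_iff, Prod.mk.injEq]
        constructor
        · rintro ⟨⟨hx, hy1, hy2⟩, hy⟩
          exact ⟨Fin.ext_iff.2 ((by exact hx : (↑x : ℕ) = 2 * m + 1).trans w0_val.symm), hy⟩
        · rintro ⟨rfl, rfl⟩
          exact ⟨⟨w0_val, hv1, by omega⟩, rfl⟩
      rw [heq, Set.ncard_singleton]
    · intro v hv
      have h1 := v.isLt
      have hv1 : (1 : ℕ) ≤ ↑v := hv
      have hwm : w0 m ∈ (SW m).verts := by show (1 : ℕ) ≤ ↑(w0 m); rw [w0_val]; omega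
      by_cases hvw : v = w0 m
      · subst hvw; exact reaches_refl hwm
      · have hv2 : (↑v : ℕ) ≠ 2 * m + 1 := fun h => hvw (Fin.ext_iff.2 (h.trans w0_val.symm))
        exact reaches_snoc (reaches_refl hwm) ⟨w0_val, hv1, show (↑v : ℕ) ≤ 2 * m by omega⟩ hv
  · constructor
    · intro v _; exact Set.mem_univ v
    · rintro ⟨x, y⟩ ⟨hx, hy1, hy2⟩
      dsimp only at hx hy1 hy2
      show DP m ↑x ↑y
      unfold DP
      omega

lemma star_leaves (hm : 1 ≤ m) :
    (SW m).leaves = {v : Fin (2 * m + 2) | (1 : ℕ) ≤ ↑v ∧ ↑v ≤ 2 * m} := by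
  ext v
  have h1 := v.isLt
  simp only [leaves, SW, Set.mem_setOf_eq]
  rw [outDeg, Set.ncard_eq_zero (Set.toFinite _), Set.eq_empty_iff_forall_notMem]
  constructor
  · rintro ⟨hv, hout⟩
    refine ⟨hv, ?_⟩
    by_contra hc
    have hvw : (↑v : ℕ) = 2 * m + 1 := by omega
    exact hout ((v, ⟨1, by omega⟩) : Fin (2 * m + 2) × Fin (2 * m + 2))
      ⟨⟨hvw, show (1:ℕ) ≤ 1 by omega, show (1:ℕ) ≤ 2 * m by omega⟩, rfl⟩
  · rintro ⟨hv1, hv2⟩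
    refine ⟨hv1, ?_⟩
    rintro ⟨x, y⟩ ⟨⟨hx, hy1, hy2⟩, hxv⟩
    dsimp only at hx hy1 hy2 hxv
    have h5 : (↑x : ℕ) = ↑v := Fin.ext_iff.1 hxv
    omega

lemma star_ncard_leaves (hm : 1 ≤ m) : (SW m).leaves.ncard = 2 * m := by
  rw [star_leaves hm, ncard_interval (by omega)]; omega

end DirGraph
namespace DirGraph

variable {m : ℕ}

lemma no_arc_into_zero {T : DirGraph (Fin (2 * m + 2))} (hsub : T.arcs ⊆ (Dm m).arcs)
    {u v : Fin (2 * m + 2)} (hv : (↑v : ℕ) = 0) (ha : (u, v) ∈ T.arcs) : False := by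
  have hd : DP m ↑u ↑v := hsub ha
  unfold DP at hd
  omega

lemma ell_ub (hm : 2 ≤ m) {T : DirGraph (Fin (2 * m + 2))} {r : Fin (2 * m + 2)}
    (h : T.IsOutTreeOf (Dm m) r) : T.leaves.ncard ≤ 2 * m := by
  obtain ⟨hT, hsubv, hsuba⟩ := h
  by_contra hc
  push_neg at hc
  have hlv : T.leaves ⊆ T.verts := fun v hv => hv.1
  -- r is not a leaf
  have hrl : r ∉ T.leaves := by
    have h2 : ∃ v ∈ T.leaves, v ≠ r := by
      obtain ⟨a, b, ha, hb, hab⟩ := (Set.one_lt_ncard_iff (s := T.leaves) (Set.toFinite _)).1 (by omega)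
      by_cases har : a = r
      · exact ⟨b, hb, fun hbr => hab (har.trans hbr.symm)⟩
      · exact ⟨a, ha, har⟩
    obtain ⟨v, hv, hvr⟩ := h2
    obtain ⟨l, ⟨hne, hnd, hmem, hch⟩, hh, hl⟩ := hT.reach_root v (hlv hv)
    cases l with
    | nil => simp at hne
    | cons x t =>
      simp at hh; subst hh
      cases t with
      | nil => simp at hl; exact absurd hl.symm hvr
      | cons y t' => exact not_leaf_of_arc (List.isChain_cons_cons.1 hch).1
  have hsubu : T.leaves ⊆ Set.univ \ {r} := fun v hv => ⟨Set.mem_univ v, fun h => hrl (h ▸ hv)⟩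
  have hcard : (Set.univ \ {r} : Set (Fin (2 * m + 2))).ncard = 2 * m + 1 := by
    rw [Set.ncard_diff_singleton_of_mem (Set.mem_univ r), Set.ncard_univ]
    simp
  have heq : T.leaves = Set.univ \ {r} :=
    Set.eq_of_subset_of_ncard_le hsubu (by omega) (Set.toFinite _)
  by_cases hr0 : (↑r : ℕ) = 0
  · -- w0 is a leaf with an in-arc from r, impossible
    have hw : w0 m ∈ T.leaves := by
      rw [heq]
      exact ⟨Set.mem_univ _, fun h => by
        have := (Fin.ext_iff.1 (Set.mem_singleton_iff.1 h)).symm.trans w0_val; omega⟩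
    obtain ⟨u, hu⟩ := exists_in_arc hT (hlv hw) (fun h => hrl (h ▸ hw))
    have hunl : u ∉ T.leaves := not_leaf_of_arc hu
    have hur : u = r := by
      by_contra hur
      exact hunl (heq ▸ ⟨Set.mem_univ u, fun h => hur (Set.mem_singleton_iff.1 h)⟩)
    subst hur
    have hd : DP m ↑u ↑(w0 m) := hsuba hu
    rw [w0_val] at hd
    unfold DP at hd
    omega
  · -- the vertex 0 is a leaf with an in-arc, impossible
    have h0 : (⟨0, by omega⟩ : Fin (2 * m + 2)) ∈ T.leaves := by
      rw [heq]
      exact ⟨Set.mem_univ _, fun h => hr0 ((Fin.ext_iff.1 (Set.mem_singleton_iff.1 h)).symm)⟩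
    obtain ⟨u, hu⟩ := exists_in_arc hT (hlv h0) (fun h => hrl (h ▸ h0))
    exact no_arc_into_zero hsuba rfl hu

end DirGraph
namespace DirGraph

variable {m : ℕ}

def pgb (m i : ℕ) : ℕ := if i = 0 then 0 else if m + i ≤ 2 * m + 1 then m + i else 2 * m + 1

lemma ncard_le_two {α : Type} {s : Set α} {a b : α} (h : s ⊆ {a, b}) : s.ncard ≤ 2 := by
  calc s.ncard ≤ ({a, b} : Set α).ncard := Set.ncard_le_ncard h (by
        refine Set.Finite.insert a (Set.finite_singleton b))
    _ ≤ ({b} : Set α).ncard + 1 := Set.ncard_insert_le a {b}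
    _ ≤ 2 := by rw [Set.ncard_singleton]

lemma ellS_ub (hm : 2 ≤ m) {T : DirGraph (Fin (2 * m + 2))} {r : Fin (2 * m + 2)}
    (h : T.IsOutBranching (Dm m) r) : T.leaves.ncard ≤ m := by
  obtain ⟨⟨hT, hsubv, hsuba⟩, hverts⟩ := h
  have hsp : ∀ v : Fin (2 * m + 2), v ∈ T.verts := by
    rw [hverts]; exact fun v => Set.mem_univ v
  have hr0 : (↑r : ℕ) = 0 := by
    by_contra hr
    obtain ⟨u, hu⟩ := exists_in_arc hT (hsp ⟨0, by omega⟩)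
      (fun he => hr ((Fin.ext_iff.1 he.symm : (↑r : ℕ) = 0)))
    exact no_arc_into_zero hsuba rfl hu
  have hw0r : w0 m ≠ r := fun he => by
    have h5 := (Fin.ext_iff.1 he.symm).trans w0_val; omega
  obtain ⟨u, hu⟩ := exists_in_arc hT (hsp _) hw0r
  have hd : DP m ↑u ↑(w0 m) := hsuba hu
  rw [w0_val] at hd
  have hu2 : (↑u : ℕ) = m ∨ (↑u : ℕ) = 2 * m := by unfold DP at hd; omega
  rcases hu2 with hum | hub
  · -- the in-neighbour of w is the end of the a-chain
    set f : ℕ → Fin (2 * m + 2) := (fun i => ⟨min i (2 * m + 1), by omega⟩) with hf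
    have hfval : ∀ i, (↑(f i) : ℕ) = min i (2 * m + 1) := fun i => rfl
    have hfm : u = f m := Fin.ext_iff.2 (by rw [hfval]; omega)
    have hchain := forced_chain hT hsp f m (show (f m, w0 m) ∈ T.arcs by rw [← hfm]; exact hu)
      (fun i hi1 hi2 he => by have h5 := (Fin.ext_iff.1 he).trans hr0; rw [hfval] at h5; omega)
      (fun i hi he => by have h5 := (Fin.ext_iff.1 he).trans w0_val; rw [hfval] at h5; omega)
      (fun i hi1 hi2 u' hu' => by
        have hd' : DP m ↑u' (min i (2 * m + 1)) := hsuba hu'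
        have h5 : (↑u' : ℕ) = min (i - 1) (2 * m + 1) ∨ (↑u' : ℕ) = 2 * m + 1 := by
          unfold DP at hd'; omega
        rcases h5 with h5 | h5
        · exact Or.inl (Fin.ext_iff.2 (h5.trans (hfval _).symm))
        · exact Or.inr (Fin.ext_iff.2 (h5.trans w0_val.symm)))
    have hnla : ∀ v : Fin (2 * m + 2), (↑v : ℕ) ≤ m → v ∉ T.leaves := by
      intro v hv
      by_cases hvm : (↑v : ℕ) = m
      · have he : v = u := Fin.ext_iff.2 (hvm.trans hum.symm)
        exact he ▸ not_leaf_of_arc hu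
      · have harc := hchain (↑v + 1) (by omega) (by omega)
        have he : f (↑v + 1 - 1) = v := Fin.ext_iff.2 (by rw [hfval]; omega)
        exact he ▸ not_leaf_of_arc harc
    by_cases hwl : w0 m ∈ T.leaves
    · have hwout : ∀ y, (w0 m, y) ∉ T.arcs := fun y hy => not_leaf_of_arc hy hwl
      have hnlb : ∀ v : Fin (2 * m + 2), m + 1 ≤ (↑v : ℕ) → (↑v : ℕ) + 1 ≤ 2 * m →
          v ∉ T.leaves := by
        intro v hv1 hv2
        have hyr : (⟨↑v + 1, by omega⟩ : Fin (2 * m + 2)) ≠ r := fun he => by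
          have h5 : (↑v : ℕ) + 1 = ↑r := Fin.ext_iff.1 he; omega
        obtain ⟨u', hu'⟩ := exists_in_arc hT (hsp _) hyr
        have hd' : DP m ↑u' (↑v + 1) := hsuba hu'
        have h5 : (↑u' : ℕ) = ↑v ∨ (↑u' : ℕ) = 2 * m + 1 := by unfold DP at hd'; omega
        rcases h5 with h5 | h5
        · have he : u' = v := Fin.ext_iff.2 h5
          exact not_leaf_of_arc (he ▸ hu')
        · have he : u' = w0 m := Fin.ext_iff.2 (h5.trans w0_val.symm)
          exact absurd hu' (he ▸ hwout _)
      have hsubl : T.leaves ⊆ {(⟨2 * m, by omega⟩ : Fin (2 * m + 2)), w0 m} := by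
        intro v hv
        have h1 := v.isLt
        have h2 : ¬ (↑v : ℕ) ≤ m := fun h => hnla v h hv
        have h3 : ¬ (m + 1 ≤ (↑v : ℕ) ∧ (↑v : ℕ) + 1 ≤ 2 * m) :=
          fun hc => hnlb v hc.1 hc.2 hv
        simp only [Set.mem_insert_iff, Set.mem_singleton_iff]
        rcases (by omega : (↑v : ℕ) = 2 * m ∨ (↑v : ℕ) = 2 * m + 1) with h5 | h5
        · exact Or.inl (Fin.ext_iff.2 h5)
        · exact Or.inr (Fin.ext_iff.2 (h5.trans w0_val.symm))
      have := ncard_le_two hsubl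
      omega
    · have hsubl : T.leaves ⊆ {v : Fin (2 * m + 2) | m + 1 ≤ (↑v : ℕ) ∧ (↑v : ℕ) ≤ 2 * m} := by
        intro v hv
        have h1 := v.isLt
        have h2 : ¬ (↑v : ℕ) ≤ m := fun h => hnla v h hv
        have h3 : (↑v : ℕ) ≠ 2 * m + 1 := fun h =>
          hwl ((Fin.ext_iff.2 (h.trans w0_val.symm) : v = w0 m) ▸ hv)
        exact ⟨by omega, by omega⟩
      have h6 := Set.ncard_le_ncard hsubl (Set.toFinite _)
      rw [ncard_interval (by omega)] at h6
      omega
  · -- the in-neighbour of w is the end of the b-chain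
    set g : ℕ → Fin (2 * m + 2) := (fun i => ⟨pgb m i, by unfold pgb; split_ifs <;> omega⟩)
      with hg
    have hgval : ∀ i, (↑(g i) : ℕ) = pgb m i := fun i => rfl
    have hgm : u = g m := Fin.ext_iff.2 (by rw [hgval]; unfold pgb; split_ifs <;> omega)
    have hchain := forced_chain hT hsp g m (show (g m, w0 m) ∈ T.arcs by rw [← hgm]; exact hu)
      (fun i hi1 hi2 he => by
        have h5 := (Fin.ext_iff.1 he).trans hr0
        rw [hgval] at h5; unfold pgb at h5; split_ifs at h5 <;> omega)
      (fun i hi he => by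
        have h5 := (Fin.ext_iff.1 he).trans w0_val
        rw [hgval] at h5; unfold pgb at h5; split_ifs at h5 <;> omega)
      (fun i hi1 hi2 u' hu' => by
        have hd' : DP m ↑u' (pgb m i) := hsuba hu'
        have h5 : (↑u' : ℕ) = pgb m (i - 1) ∨ (↑u' : ℕ) = 2 * m + 1 := by
          unfold DP at hd'; unfold pgb at hd' ⊢; split_ifs at hd' ⊢ <;> omega
        rcases h5 with h5 | h5
        · exact Or.inl (Fin.ext_iff.2 (h5.trans (hgval _).symm))
        · exact Or.inr (Fin.ext_iff.2 (h5.trans w0_val.symm)))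
    have hnlb : ∀ v : Fin (2 * m + 2),
        ((↑v : ℕ) = 0 ∨ (m + 1 ≤ (↑v : ℕ) ∧ (↑v : ℕ) ≤ 2 * m)) → v ∉ T.leaves := by
      intro v hv
      rcases (by omega : (↑v : ℕ) = 0 ∨ (↑v : ℕ) = 2 * m ∨
          (m + 1 ≤ (↑v : ℕ) ∧ (↑v : ℕ) + 1 ≤ 2 * m)) with h5 | h5 | h5
      · have harc := hchain 1 (by omega) (by omega)
        have he : g (1 - 1) = v := Fin.ext_iff.2 (by rw [hgval]; unfold pgb; simp; omega)
        exact he ▸ not_leaf_of_arc harc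
      · have he : v = u := Fin.ext_iff.2 (h5.trans hub.symm)
        exact he ▸ not_leaf_of_arc hu
      · have harc := hchain (↑v - m + 1) (by omega) (by omega)
        have he : g (↑v - m + 1 - 1) = v := Fin.ext_iff.2 (by
          rw [hgval]; unfold pgb; split_ifs <;> omega)
        exact he ▸ not_leaf_of_arc harc
    by_cases hwl : w0 m ∈ T.leaves
    · have hwout : ∀ y, (w0 m, y) ∉ T.arcs := fun y hy => not_leaf_of_arc hy hwl
      have hnla : ∀ v : Fin (2 * m + 2), 1 ≤ (↑v : ℕ) → (↑v : ℕ) + 1 ≤ m →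
          v ∉ T.leaves := by
        intro v hv1 hv2
        have hyr : (⟨↑v + 1, by omega⟩ : Fin (2 * m + 2)) ≠ r := fun he => by
          have h5 : (↑v : ℕ) + 1 = ↑r := Fin.ext_iff.1 he; omega
        obtain ⟨u', hu'⟩ := exists_in_arc hT (hsp _) hyr
        have hd' : DP m ↑u' (↑v + 1) := hsuba hu'
        have h5 : (↑u' : ℕ) = ↑v ∨ (↑u' : ℕ) = 2 * m + 1 := by unfold DP at hd'; omega
        rcases h5 with h5 | h5
        · have he : u' = v := Fin.ext_iff.2 h5
          exact not_leaf_of_arc (he ▸ hu')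
        · have he : u' = w0 m := Fin.ext_iff.2 (h5.trans w0_val.symm)
          exact absurd hu' (he ▸ hwout _)
      have hsubl : T.leaves ⊆ {(⟨m, by omega⟩ : Fin (2 * m + 2)), w0 m} := by
        intro v hv
        have h1 := v.isLt
        have h2 : ¬ ((↑v : ℕ) = 0 ∨ (m + 1 ≤ (↑v : ℕ) ∧ (↑v : ℕ) ≤ 2 * m)) :=
          fun h => hnlb v h hv
        have h3 : ¬ (1 ≤ (↑v : ℕ) ∧ (↑v : ℕ) + 1 ≤ m) := fun hc => hnla v hc.1 hc.2 hv
        simp only [Set.mem_insert_iff, Set.mem_singleton_iff]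
        rcases (by omega : (↑v : ℕ) = m ∨ (↑v : ℕ) = 2 * m + 1) with h5 | h5
        · exact Or.inl (Fin.ext_iff.2 h5)
        · exact Or.inr (Fin.ext_iff.2 (h5.trans w0_val.symm))
      have := ncard_le_two hsubl
      omega
    · have hsubl : T.leaves ⊆ {v : Fin (2 * m + 2) | (1 : ℕ) ≤ ↑v ∧ (↑v : ℕ) ≤ m} := by
        intro v hv
        have h1 := v.isLt
        have h2 : ¬ ((↑v : ℕ) = 0 ∨ (m + 1 ≤ (↑v : ℕ) ∧ (↑v : ℕ) ≤ 2 * m)) :=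
          fun h => hnlb v h hv
        have h3 : (↑v : ℕ) ≠ 2 * m + 1 := fun h =>
          hwl ((Fin.ext_iff.2 (h.trans w0_val.symm) : v = w0 m) ▸ hv)
        exact ⟨by omega, by omega⟩
      have h6 := Set.ncard_le_ncard hsubl (Set.toFinite _)
      rw [ncard_interval (by omega)] at h6
      omega

end DirGraph
namespace DirGraph

theorem exists_digraph_ratio_two (m : ℕ) (hm : 2 ≤ m) :
    ∃ D : DirGraph (Fin (2 * m + 2)),
      D.WellFormed ∧ D.verts = Set.univ ∧
      (∃ (T : DirGraph (Fin (2 * m + 2))) (r : Fin (2 * m + 2)),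
        IsOutBranching T D r) ∧
      (∀ a ∈ D.arcs, ¬ Useless D a) ∧
      ell D = 2 * m ∧ ellS D = m := by
  have hm1 : 1 ≤ m := by omega
  refine ⟨Dm m, ?_, rfl, ⟨TA m, r0 m, branchA hm1⟩, ?_, ?_, ?_⟩
  · rintro ⟨x, y⟩ ha
    have hd : DP m ↑x ↑y := ha
    refine ⟨Set.mem_univ _, Set.mem_univ _, fun he => ?_⟩
    have h5 : (↑x : ℕ) = ↑y := Fin.ext_iff.1 (by exact he)
    unfold DP at hd
    omega
  · intro a ha hU
    rcases arc_cover hm1 ha with h | h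
    · exact hU (TA m) (r0 m) (branchA hm1) h
    · exact hU (TB m) (r0 m) (branchB hm1) h
  · have hmem : 2 * m ∈ {k | ∃ (T : DirGraph (Fin (2 * m + 2))) (r : Fin (2 * m + 2)),
        IsOutTreeOf T (Dm m) r ∧ (leaves T).ncard = k} :=
      ⟨SW m, w0 m, star_outTreeOf hm1, star_ncard_leaves hm1⟩
    have hub : ∀ k ∈ {k | ∃ (T : DirGraph (Fin (2 * m + 2))) (r : Fin (2 * m + 2)),
        IsOutTreeOf T (Dm m) r ∧ (leaves T).ncard = k}, k ≤ 2 * m := by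
      rintro k ⟨T, r, h1, rfl⟩
      exact ell_ub hm h1
    exact le_antisymm (csSup_le ⟨2 * m, hmem⟩ hub) (le_csSup ⟨2 * m, hub⟩ hmem)
  · have hmem : m ∈ {k | ∃ (T : DirGraph (Fin (2 * m + 2))) (r : Fin (2 * m + 2)),
        IsOutBranching T (Dm m) r ∧ (leaves T).ncard = k} :=
      ⟨TA m, r0 m, branchA hm1, ncard_leavesA hm1⟩
    have hub : ∀ k ∈ {k | ∃ (T : DirGraph (Fin (2 * m + 2))) (r : Fin (2 * m + 2)),
        IsOutBranching T (Dm m) r ∧ (leaves T).ncard = k}, k ≤ m := by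
      rintro k ⟨T, r, h1, rfl⟩
      exact ellS_ub hm h1
    exact le_antisymm (csSup_le ⟨m, hmem⟩ hub) (le_csSup ⟨m, hub⟩ hmem)

end DirGraph
end

section
/- Let D be a digraph, let T be an out-tree of D with root r, let r' be a vertex of D with R_D(r') = V(D), and let P be a dipath in D from r' to r. Then D has an out-branching with at least |Leaf(T) \ V(P)| leaves. -/
namespace DirGraph

section Helpers

variable {V : Type}

private lemma chain'_pairs {R : V → V → Prop} :
    ∀ (l : List V), l.Chain' R → ∀ a ∈ l.zip l.tail, R a.1 a.2
  | [], _, a, ha => by simp [List.zip] at ha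
  | [x], _, a, ha => by simp [List.zip] at ha
  | x :: y :: t, h, a, ha => by
    rw [List.Chain', List.isChain_cons_cons] at h
    have : (x :: y :: t).zip (x :: y :: t).tail = (x, y) :: ((y :: t).zip t) := rfl
    rw [this] at ha
    rcases List.mem_cons.1 ha with h1 | h2
    · subst h1; exact h.1
    · exact chain'_pairs (y :: t) h.2 a h2

private lemma chain'_zip : ∀ (l : List V), l.Chain' (fun u v => (u, v) ∈ l.zip l.tail)
  | [] => List.isChain_nil
  | [x] => List.isChain_singleton x
  | x :: y :: t => by
    have hz : (x :: y :: t).zip (x :: y :: t).tail = (x, y) :: ((y :: t).zip t) := rfl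
    rw [List.Chain', List.isChain_cons_cons]
    refine ⟨by rw [hz]; exact List.mem_cons_self, ?_⟩
    have := chain'_zip (y :: t)
    exact this.imp (fun a b hab => by rw [hz]; exact List.mem_cons_of_mem _ hab)

private lemma zip_snd_unique :
    ∀ (l : List V), l.Nodup → ∀ v ∈ l.tail,
      ∃ u, (u, v) ∈ l.zip l.tail ∧ ∀ a ∈ l.zip l.tail, a.2 = v → a = (u, v)
  | [], _, v, hv => by simp at hv
  | [x], _, v, hv => by simp at hv
  | x :: y :: t, h, v, hv => by
    have hz : (x :: y :: t).zip (x :: y :: t).tail = (x, y) :: ((y :: t).zip t) := rfl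
    rw [List.nodup_cons] at h
    by_cases hvy : v = y
    · subst hvy
      refine ⟨x, by rw [hz]; exact List.mem_cons_self, ?_⟩
      intro a ha h2
      rw [hz] at ha
      rcases List.mem_cons.1 ha with h1 | h1
      · exact h1
      · exfalso
        have := (List.of_mem_zip (a := a.1) (b := a.2) (by simpa using h1)).2
        rw [h2] at this
        exact (List.nodup_cons.1 h.2).1 this
    · have hvt : v ∈ t := by
        rcases List.mem_cons.1 hv with h1 | h1
        · exact absurd h1 hvy
        · exact h1
      obtain ⟨u, hu1, hu2⟩ := zip_snd_unique (y :: t) h.2 v hvt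
      refine ⟨u, by rw [hz]; exact List.mem_cons_of_mem _ hu1, ?_⟩
      intro a ha h2
      rw [hz] at ha
      rcases List.mem_cons.1 ha with h1 | h1
      · exfalso; rw [h1] at h2; exact hvy h2.symm
      · exact hu2 a h1 h2

private lemma split_last_mem (S : Set V) :
    ∀ (q : List V), (∃ x ∈ q, x ∈ S) →
      ∃ q1 x q2, q = q1 ++ x :: q2 ∧ x ∈ S ∧ ∀ y ∈ q2, y ∉ S
  | [], h => by simp at h
  | a :: t, h => by
    by_cases ht : ∃ x ∈ t, x ∈ S
    · obtain ⟨q1, x, q2, heq, hx, h2⟩ := split_last_mem S t ht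
      exact ⟨a :: q1, x, q2, by rw [heq]; rfl, hx, h2⟩
    · have ha : a ∈ S := by
        obtain ⟨x, hx, hxS⟩ := h
        rcases List.mem_cons.1 hx with h1 | h1
        · rwa [h1] at hxS
        · exact absurd ⟨x, h1, hxS⟩ ht
      exact ⟨[], a, t, rfl, ha, fun y hy hyS => ht ⟨y, hy, hyS⟩⟩

private lemma crossing_s19 {R : V → V → Prop} (S : Set V) :
    ∀ (m : List V), m.Chain' R → ∀ a ∈ m.head?, a ∈ S → ∀ b ∈ m.getLast?, b ∉ S →
      ∃ u w, u ∈ S ∧ w ∉ S ∧ R u w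
  | [], _, a, ha, _, b, hb, _ => by simp at ha
  | [x], _, a, ha, haS, b, hb, hbS => by
    simp at ha hb; subst ha; subst hb; exact absurd haS hbS
  | x :: y :: t, h, a, ha, haS, b, hb, hbS => by
    simp only [List.head?_cons, Option.mem_def, Option.some_inj] at ha
    rw [List.Chain', List.isChain_cons_cons] at h
    by_cases hy : y ∈ S
    · have hlast : b ∈ (y :: t).getLast? := by
        rwa [List.getLast?_cons_cons] at hb
      exact crossing_s19 S (y :: t) h.2 y (by simp) hy b hlast hbS
    · exact ⟨x, y, ha ▸ haS, hy, h.1⟩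

private lemma chain'_imp_tail {R R' : V → V → Prop} :
    ∀ (m : List V), m.Chain' R → (∀ u v, R u v → v ∈ m.tail → R' u v) → m.Chain' R'
  | [], _, _ => List.isChain_nil
  | [x], _, _ => List.isChain_singleton x
  | x :: y :: t, h, himp => by
    rw [List.Chain', List.isChain_cons_cons] at h ⊢
    refine ⟨himp x y h.1 (List.mem_cons_self), ?_⟩
    exact chain'_imp_tail (y :: t) h.2 fun u v huv hv =>
      himp u v huv (List.mem_cons_of_mem _ hv)

private lemma Reaches.mono {T1 T2 : DirGraph V} (hv : T1.verts ⊆ T2.verts)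
    (ha : T1.arcs ⊆ T2.arcs) {u v : V} (h : T1.Reaches u v) : T2.Reaches u v := by
  obtain ⟨m, ⟨hne, hnd, hmem, hch⟩, hh, hl⟩ := h
  exact ⟨m, ⟨hne, hnd, fun x hx => hv (hmem x hx),
    hch.imp fun a b hab => ha hab⟩, hh, hl⟩

private lemma reaches_snoc_s19 {T1 T2 : DirGraph V} (hv : T1.verts ⊆ T2.verts)
    (ha : T1.arcs ⊆ T2.arcs) {u v w : V} (h : T1.Reaches u v)
    (harc : (v, w) ∈ T2.arcs) (hw : w ∈ T2.verts) (hnw : w ∉ T1.verts) :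
    T2.Reaches u w := by
  obtain ⟨m, ⟨hne, hnd, hmem, hch⟩, hh, hl⟩ := h
  refine ⟨m ++ [w], ⟨by simp, ?_, ?_, ?_⟩, ?_, by rw [List.getLast?_concat]⟩
  · rw [List.nodup_append]
    exact ⟨hnd, List.nodup_singleton w,
      fun x hx y hy hxy => by
        rw [List.mem_singleton] at hy
        subst hy; subst hxy; exact hnw (hmem _ hx)⟩
  · intro x hx
    rcases List.mem_append.1 hx with h1 | h1
    · exact hv (hmem x h1)
    · rw [List.mem_singleton] at h1; exact h1 ▸ hw
  · rw [List.Chain', List.isChain_append]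
    refine ⟨hch.imp fun a b hab => ha hab, List.isChain_singleton w, ?_⟩
    intro x hx y hy
    simp only [List.head?_cons, Option.mem_def, Option.some_inj] at hy
    rw [hl] at hx
    simp only [Option.mem_def, Option.some_inj] at hx
    rw [← hx, ← hy]; exact harc
  · rw [List.head?_append, hh]; rfl

end Helpers

end DirGraph


namespace DirGraph

section Main

variable {V : Type} [Fintype V]

private lemma glue_outTree (D T : DirGraph V) (r r' : V) (l : List V)
    (hT : IsOutTreeOf T D r) (hP : D.IsDipath l) (hh : l.head? = some r')
    (hl : l.getLast? = some r) :
    IsOutTreeOf ⟨{x | x ∈ l} ∪ T.verts, listArcs l ∪ {a ∈ T.arcs | a.2 ∉ l}⟩ D r' := by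
  obtain ⟨⟨harcs_mem, hroot_mem, hroot_in, hind, hreach⟩, hsubV, hsubA⟩ := hT
  obtain ⟨hne, hnd, hmem, hch⟩ := hP
  have hrl : r ∈ l := List.mem_of_getLast? hl
  have hr'l : r' ∈ l := List.mem_of_mem_head? (Option.mem_def.mpr hh)
  have hr'tail : r' ∉ l.tail := by
    cases l with
    | nil => simp at hh
    | cons a t =>
      simp only [List.head?_cons, Option.some_inj] at hh
      subst hh
      exact (List.nodup_cons.1 hnd).1
  -- richer reachability of vertices on l
  have reach_in : ∀ v ∈ l, ∃ p : List V, p ≠ [] ∧ p.Nodup ∧ (∀ x ∈ p, x ∈ l) ∧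
      p.Chain' (fun u w => (u, w) ∈ l.zip l.tail) ∧ p.head? = some r' ∧
      p.getLast? = some v := by
    intro v hv
    obtain ⟨l1, l2, heq⟩ := List.append_of_mem hv
    have hp : (l1 ++ [v]) ++ l2 = l := by rw [heq]; simp
    have hpre : (l1 ++ [v]) <+: l := ⟨l2, hp⟩
    refine ⟨l1 ++ [v], by simp, List.Nodup.sublist hpre.sublist hnd,
      fun x hx => hpre.sublist.subset hx, (chain'_zip l).prefix hpre, ?_,
      List.getLast?_concat⟩
    have h1 : ((l1 ++ [v]) ++ l2).head? = (l1 ++ [v]).head?.or l2.head? :=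
      List.head?_append
    obtain ⟨z, hz⟩ : ∃ z, (l1 ++ [v]).head? = some z := by cases l1 <;> simp
    rw [hp, hh, hz] at h1
    simp only [Option.some_or] at h1
    rw [hz, ← h1]
  constructor
  · constructor
    · -- arcs_mem
      rintro a (ha | ha)
      · have := List.of_mem_zip (a := a.1) (b := a.2) (by exact ha)
        exact ⟨Or.inl this.1, Or.inl (List.mem_of_mem_tail this.2)⟩
      · obtain ⟨h1, h2⟩ := harcs_mem a ha.1
        exact ⟨Or.inr h1, Or.inr h2⟩
    · exact Or.inl hr'l
    · -- root_indeg
      show ({a ∈ listArcs l ∪ {a ∈ T.arcs | a.2 ∉ l} | a.2 = r'}).ncard = 0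
      have hempty : {a ∈ listArcs l ∪ {a ∈ T.arcs | a.2 ∉ l} | a.2 = r'} = ∅ := by
        rw [Set.eq_empty_iff_forall_notMem]
        rintro a ⟨ha | ha, h2⟩
        · have := (List.of_mem_zip (a := a.1) (b := a.2) (by exact ha)).2
          rw [h2] at this
          exact hr'tail this
        · exact ha.2 (by rw [h2]; exact hr'l)
      rw [hempty, Set.ncard_empty]
    · -- indeg_one
      intro v hv hne'
      by_cases hvl : v ∈ l
      · have hvt : v ∈ l.tail := by
          cases l with
          | nil => simp at hh
          | cons a t =>
            simp only [List.head?_cons, Option.some_inj] at hh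
            subst hh
            rcases List.mem_cons.1 hvl with h1 | h1
            · exact absurd h1 hne'
            · exact h1
        obtain ⟨u, hu, huniq⟩ := zip_snd_unique l hnd v hvt
        show ({a ∈ listArcs l ∪ {a ∈ T.arcs | a.2 ∉ l} | a.2 = v}).ncard = 1
        have hset : {a ∈ listArcs l ∪ {a ∈ T.arcs | a.2 ∉ l} | a.2 = v} = {(u, v)} := by
          ext a
          constructor
          · rintro ⟨ha | ha, h2⟩
            · exact huniq a ha h2
            · exact absurd (h2 ▸ hvl) ha.2
          · rintro rfl
            exact ⟨Or.inl hu, rfl⟩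
        rw [hset, Set.ncard_singleton]
      · have hvT : v ∈ T.verts := by
          rcases hv with h1 | h1
          · exact absurd h1 hvl
          · exact h1
        have hvr : v ≠ r := fun h => hvl (h ▸ hrl)
        show ({a ∈ listArcs l ∪ {a ∈ T.arcs | a.2 ∉ l} | a.2 = v}).ncard = 1
        have hset : {a ∈ listArcs l ∪ {a ∈ T.arcs | a.2 ∉ l} | a.2 = v}
            = {a ∈ T.arcs | a.2 = v} := by
          ext a
          constructor
          · rintro ⟨ha | ha, h2⟩
            · exfalso
              have := (List.of_mem_zip (a := a.1) (b := a.2) (by exact ha)).2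
              exact hvl (h2 ▸ List.mem_of_mem_tail this)
            · exact ⟨ha.1, h2⟩
          · rintro ⟨ha, h2⟩
            exact ⟨Or.inr ⟨ha, h2 ▸ hvl⟩, h2⟩
        rw [hset]
        exact hind v hvT hvr
    · -- reach_root
      intro v hv
      by_cases hvl : v ∈ l
      · obtain ⟨p, pne, pnd, pmem, pch, ph, pl⟩ := reach_in v hvl
        exact ⟨p, ⟨pne, pnd, fun x hx => Or.inl (pmem x hx),
          pch.imp fun a b hab => Or.inl hab⟩, ph, pl⟩
      · have hvT : v ∈ T.verts := by
          rcases hv with h1 | h1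
          · exact absurd h1 hvl
          · exact h1
        obtain ⟨q, ⟨qne, qnd, qmem, qch⟩, qh, ql⟩ := hreach v hvT
        have hrq : r ∈ q := List.mem_of_mem_head? (Option.mem_def.mpr qh)
        obtain ⟨q1, x, q2, heq, hx, hnotin⟩ :=
          split_last_mem {x | x ∈ l} q ⟨r, hrq, hrl⟩
        have hsfx : (x :: q2) <:+ q := ⟨q1, heq.symm⟩
        cases q2 with
        | nil =>
          exfalso
          have : q.getLast? = some x := by
            rw [heq]
            exact List.getLast?_concat
          rw [ql] at this
          exact hvl (Option.some_inj.1 this ▸ hx)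
        | cons w q2' =>
          obtain ⟨p, pne, pnd, pmem, pch, ph, pl⟩ := reach_in x hx
          have hch2 : (x :: w :: q2').Chain' (fun a b => (a, b) ∈ T.arcs) :=
            qch.suffix hsfx
          have hch2' : (x :: w :: q2').Chain'
              (fun a b => (a, b) ∈ listArcs l ∪ {a ∈ T.arcs | a.2 ∉ l}) := by
            refine chain'_imp_tail _ hch2 fun a b hab hb => Or.inr ⟨hab, ?_⟩
            exact hnotin b hb
          rw [List.Chain', List.isChain_cons] at hch2'
          have hq2mem : ∀ y ∈ w :: q2', y ∈ q := fun y hy => by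
            rw [heq]
            exact List.mem_append_right _ (List.mem_cons_of_mem _ hy)
          have hq2sub : (w :: q2').Sublist q :=
            (List.sublist_cons_self x _).trans hsfx.sublist
          refine ⟨p ++ (w :: q2'), ⟨by simp, ?_, ?_, ?_⟩, ?_, ?_⟩
          · rw [List.nodup_append]
            refine ⟨pnd, List.Nodup.sublist hq2sub qnd, ?_⟩
            intro y hy y' hy' hyy
            subst hyy; exact hnotin y hy' (pmem y hy)
          · intro y hy
            rcases List.mem_append.1 hy with h1 | h1
            · exact Or.inl (pmem y h1)
            · exact Or.inr (qmem y (hq2mem y h1))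
          · rw [List.Chain', List.isChain_append]
            refine ⟨pch.imp fun a b hab => Or.inl hab, hch2'.2, ?_⟩
            intro a ha b hb
            rw [pl] at ha
            simp only [Option.mem_def, Option.some_inj] at ha
            subst ha
            exact hch2'.1 b hb
          · rw [List.head?_append, ph]; rfl
          · obtain ⟨z, hz⟩ : ∃ z, (w :: q2').getLast? = some z :=
              Option.isSome_iff_exists.1 (List.getLast?_isSome.2 (by simp))
            have hq : q.getLast? = some z := by
              have h1 : q = (q1 ++ [x]) ++ (w :: q2') := by rw [heq]; simp
              rw [h1, List.getLast?_append, hz]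
              rfl
            rw [ql] at hq
            rw [List.getLast?_append, hz]
            simp only [Option.some_or]
            exact hq.symm ▸ rfl
  · -- subgraph
    constructor
    · rintro x (hx | hx)
      · exact hmem x hx
      · exact hsubV hx
    · rintro a (ha | ha)
      · exact chain'_pairs l hch a (by exact ha)
      · exact hsubA ha.1

private lemma extend_outTree (D : DirGraph V) (hD : D.WellFormed) (r' : V)
    (hr : ∀ v ∈ D.verts, D.Reaches r' v) :
    ∀ (n : ℕ) (T1 : DirGraph V), (D.verts \ T1.verts).ncard ≤ n →
      IsOutTreeOf T1 D r' →
      ∃ T2 : DirGraph V, IsOutBranching T2 D r' ∧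
        (leaves T1).ncard ≤ (leaves T2).ncard := by
  intro n
  induction n with
  | zero =>
    intro T1 hcard hT1
    have h0 : D.verts \ T1.verts = ∅ := by
      rw [← Set.ncard_eq_zero (Set.toFinite _)]
      omega
    have hveq : T1.verts = D.verts :=
      Set.Subset.antisymm hT1.2.1 (Set.diff_eq_empty.1 h0)
    exact ⟨T1, ⟨hT1, hveq⟩, le_rfl⟩
  | succ n ih =>
    intro T1 hcard hT1
    by_cases hveq : T1.verts = D.verts
    · exact ⟨T1, ⟨hT1, hveq⟩, le_rfl⟩
    · obtain ⟨v, hvD, hvT⟩ :=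
        Set.exists_of_ssubset (ssubset_of_subset_of_ne hT1.2.1 hveq)
      obtain ⟨m, ⟨mne, mnd, mmem, mch⟩, mh, ml⟩ := hr v hvD
      obtain ⟨u, w, huS, hwS, harc⟩ := crossing_s19 T1.verts m mch r'
        (Option.mem_def.mpr mh) hT1.1.root_mem v (Option.mem_def.mpr ml) hvT
      have hwD : w ∈ D.verts := (hD _ harc).2.1
      have huw : u ≠ w := fun h => hwS (h ▸ huS)
      set T2 : DirGraph V := ⟨insert w T1.verts, insert (u, w) T1.arcs⟩ with hT2def
      have hT2 : IsOutTreeOf T2 D r' := by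
        constructor
        · constructor
          · intro a ha
            rcases Set.mem_insert_iff.1 ha with rfl | ha'
            · exact ⟨Set.mem_insert_of_mem _ huS, Set.mem_insert _ _⟩
            · obtain ⟨h1, h2⟩ := hT1.1.arcs_mem a ha'
              exact ⟨Set.mem_insert_of_mem _ h1, Set.mem_insert_of_mem _ h2⟩
          · exact Set.mem_insert_of_mem _ hT1.1.root_mem
          · show ({a ∈ insert (u, w) T1.arcs | a.2 = r'}).ncard = 0
            have hset : {a ∈ insert (u, w) T1.arcs | a.2 = r'}
                = {a ∈ T1.arcs | a.2 = r'} := by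
              ext a
              constructor
              · rintro ⟨h1, h2⟩
                rcases Set.mem_insert_iff.1 h1 with rfl | ha
                · exfalso
                  have hwr : w = r' := h2
                  exact hwS (by rw [hwr]; exact hT1.1.root_mem)
                · exact ⟨ha, h2⟩
              · rintro ⟨ha, h2⟩
                exact ⟨Set.mem_insert_of_mem _ ha, h2⟩
            rw [hset]
            exact hT1.1.root_indeg
          · intro x hx hxr
            rcases Set.mem_insert_iff.1 hx with hxw | hxT
            · rw [hxw]
              show ({a ∈ insert (u, w) T1.arcs | a.2 = w}).ncard = 1
              have hset : {a ∈ insert (u, w) T1.arcs | a.2 = w} = {(u, w)} := by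
                ext a
                constructor
                · rintro ⟨h1, h2⟩
                  rcases Set.mem_insert_iff.1 h1 with rfl | ha
                  · rfl
                  · exact absurd (h2 ▸ (hT1.1.arcs_mem a ha).2) hwS
                · rintro rfl
                  exact ⟨Set.mem_insert _ _, rfl⟩
              rw [hset, Set.ncard_singleton]
            · show ({a ∈ insert (u, w) T1.arcs | a.2 = x}).ncard = 1
              have hxw : x ≠ w := fun h => hwS (h ▸ hxT)
              have hset : {a ∈ insert (u, w) T1.arcs | a.2 = x}
                  = {a ∈ T1.arcs | a.2 = x} := by
                ext a
                constructor
                · rintro ⟨h1, h2⟩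
                  rcases Set.mem_insert_iff.1 h1 with rfl | ha
                  · exact absurd h2.symm hxw
                  · exact ⟨ha, h2⟩
                · rintro ⟨ha, h2⟩
                  exact ⟨Set.mem_insert_of_mem _ ha, h2⟩
              rw [hset]
              exact hT1.1.indeg_one x hxT hxr
          · intro x hx
            rcases Set.mem_insert_iff.1 hx with hxw | hxT
            · rw [hxw]
              exact reaches_snoc_s19 (Set.subset_insert _ _) (Set.subset_insert _ _)
                (hT1.1.reach_root u huS) (Set.mem_insert _ _)
                (Set.mem_insert _ _) hwS
            · exact Reaches.mono (Set.subset_insert _ _) (Set.subset_insert _ _)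
                (hT1.1.reach_root x hxT)
        · constructor
          · exact Set.insert_subset hwD hT1.2.1
          · exact Set.insert_subset harc hT1.2.2
      have hcard2 : (D.verts \ T2.verts).ncard ≤ n := by
        have hset : D.verts \ T2.verts = (D.verts \ T1.verts) \ {w} := by
          show D.verts \ insert w T1.verts = (D.verts \ T1.verts) \ {w}
          ext x
          simp only [Set.mem_diff, Set.mem_insert_iff, Set.mem_singleton_iff]
          tauto
        have hlt : ((D.verts \ T1.verts) \ {w}).ncard < (D.verts \ T1.verts).ncard :=
          Set.ncard_diff_singleton_lt_of_mem ⟨hwD, hwS⟩ (Set.toFinite _)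
        rw [hset]
        omega
      obtain ⟨T2', hb, hle⟩ := ih T2 hcard2 hT2
      refine ⟨T2', hb, le_trans ?_ hle⟩
      have hwL : w ∉ leaves T1 \ {u} := fun h => hwS h.1.1
      have hsub : insert w (leaves T1 \ {u}) ⊆ leaves T2 := by
        intro y hy
        rcases Set.mem_insert_iff.1 hy with hyw | ⟨⟨hy1, hy2⟩, hyu⟩
        · rw [hyw]
          refine ⟨Set.mem_insert _ _, ?_⟩
          show ({a ∈ insert (u, w) T1.arcs | a.1 = w}).ncard = 0
          have hset : {a ∈ insert (u, w) T1.arcs | a.1 = w} = ∅ := by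
            rw [Set.eq_empty_iff_forall_notMem]
            rintro a ⟨h1, h2⟩
            rcases Set.mem_insert_iff.1 h1 with rfl | ha
            · exact huw h2
            · exact hwS (h2 ▸ (hT1.1.arcs_mem a ha).1)
          rw [hset, Set.ncard_empty]
        · refine ⟨Set.mem_insert_of_mem _ hy1, ?_⟩
          show ({a ∈ insert (u, w) T1.arcs | a.1 = y}).ncard = 0
          have hT1empty : {a ∈ T1.arcs | a.1 = y} = ∅ :=
            (Set.ncard_eq_zero (Set.toFinite _)).1 hy2
          have hset : {a ∈ insert (u, w) T1.arcs | a.1 = y} = ∅ := by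
            rw [Set.eq_empty_iff_forall_notMem]
            rintro a ⟨h1, h2⟩
            rcases Set.mem_insert_iff.1 h1 with rfl | ha
            · exact hyu h2.symm
            · exact Set.eq_empty_iff_forall_notMem.1 hT1empty a ⟨ha, h2⟩
          rw [hset, Set.ncard_empty]
      calc (leaves T1).ncard ≤ (leaves T1 \ {u}).ncard + 1 := by
            have h1 : leaves T1 ⊆ insert u (leaves T1 \ {u}) := by
              intro x hx
              by_cases hxu : x = u
              · exact Set.mem_insert_iff.2 (Or.inl hxu)
              · exact Set.mem_insert_of_mem _ ⟨hx, hxu⟩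
            exact le_trans (Set.ncard_le_ncard h1 (Set.toFinite _))
              (Set.ncard_insert_le _ _)
        _ = (insert w (leaves T1 \ {u})).ncard :=
            (Set.ncard_insert_of_notMem hwL (Set.toFinite _)).symm
        _ ≤ (leaves T2).ncard := Set.ncard_le_ncard hsub (Set.toFinite _)

end Main

end DirGraph

namespace DirGraph

theorem outBranching_of_outTree_and_dipath {V : Type} [Fintype V]
    (D T : DirGraph V) (r r' : V) (l : List V) (hD : D.WellFormed)
    (hT : IsOutTreeOf T D r)
    (hr' : reachSet D r' = D.verts)
    (hP : D.IsDipath l) (hh : l.head? = some r') (hl : l.getLast? = some r) :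
    ∃ (T' : DirGraph V) (r'' : V), IsOutBranching T' D r'' ∧
      (leaves T \ {v | v ∈ l}).ncard ≤ (leaves T').ncard := by
  have hT1 := glue_outTree D T r r' l hT hP hh hl
  set T1 : DirGraph V := ⟨{x | x ∈ l} ∪ T.verts, listArcs l ∪ {a ∈ T.arcs | a.2 ∉ l}⟩
    with hT1def
  have hr : ∀ v ∈ D.verts, D.Reaches r' v := fun v hv => by
    rw [← hr'] at hv; exact hv
  obtain ⟨T2, hb, hle⟩ := extend_outTree D hD r' hr _ T1 le_rfl hT1
  refine ⟨T2, r', hb, le_trans ?_ hle⟩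
  refine Set.ncard_le_ncard ?_ (Set.toFinite _)
  rintro v ⟨⟨hv1, hv2⟩, hvl⟩
  have hvl' : v ∉ l := hvl
  refine ⟨Or.inr hv1, ?_⟩
  show ({a ∈ T1.arcs | a.1 = v}).ncard = 0
  have hTempty : {a ∈ T.arcs | a.1 = v} = ∅ :=
    (Set.ncard_eq_zero (Set.toFinite _)).1 hv2
  have hset : {a ∈ T1.arcs | a.1 = v} = ∅ := by
    rw [Set.eq_empty_iff_forall_notMem]
    rintro a ⟨ha | ha, h2⟩
    · have := (List.of_mem_zip (a := a.1) (b := a.2) (by exact ha)).1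
      exact hvl' (h2 ▸ this)
    · exact Set.eq_empty_iff_forall_notMem.1 hTempty a ⟨ha.1, h2⟩
  rw [hset, Set.ncard_empty]

end DirGraph
end
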